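/- Let E₁, E₂, E₃ be real inner product spaces, let t₁, t₂, t₃ > 0 and let ε > 0. Then the function f : E₁ × E₂ × E₃ → ℝ defined by f(x₁, x₂, x₃) = √(t₁‖x₁‖² + t₂‖x₂‖² + t₃‖x₃‖² + ε·√(‖x₁‖⁴ + ‖x₂‖⁴ + ‖x₃‖⁴)) is a norm on E₁ × E₂ × E₃: it is positive definite, absolutely homogeneous, and satisfies the triangle inequality. -/
import Mathlib

private lemma cs3 (p1 p2 p3 q1 q2 q3 : ℝ) :
    (p1*q1+p2*q2+p3*q3)^2 ≤ (p1^2+p2^2+p3^2)*(q1^2+q2^2+q3^2) := by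
  nlinarith [sq_nonneg (p1*q2-p2*q1), sq_nonneg (p1*q3-p3*q1), sq_nonneg (p2*q3-p3*q2)]

private lemma dot_le3 (p1 p2 p3 q1 q2 q3 : ℝ) (h : 0 ≤ p1*q1+p2*q2+p3*q3) :
    p1*q1+p2*q2+p3*q3 ≤ Real.sqrt (p1^2+p2^2+p3^2) * Real.sqrt (q1^2+q2^2+q3^2) := by
  rw [← Real.sqrt_mul (by positivity)]
  calc p1*q1+p2*q2+p3*q3 = Real.sqrt ((p1*q1+p2*q2+p3*q3)^2) := (Real.sqrt_sq h).symm
    _ ≤ _ := Real.sqrt_le_sqrt (cs3 _ _ _ _ _ _)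

private lemma mink3 (p1 p2 p3 q1 q2 q3 : ℝ) (hp1 : 0 ≤ p1) (hp2 : 0 ≤ p2) (hp3 : 0 ≤ p3)
    (hq1 : 0 ≤ q1) (hq2 : 0 ≤ q2) (hq3 : 0 ≤ q3) :
    Real.sqrt ((p1+q1)^2+(p2+q2)^2+(p3+q3)^2) ≤
      Real.sqrt (p1^2+p2^2+p3^2) + Real.sqrt (q1^2+q2^2+q3^2) := by
  have hP : Real.sqrt (p1^2+p2^2+p3^2) ^ 2 = p1^2+p2^2+p3^2 := Real.sq_sqrt (by positivity)
  have hQ : Real.sqrt (q1^2+q2^2+q3^2) ^ 2 = q1^2+q2^2+q3^2 := Real.sq_sqrt (by positivity)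
  have hdot := dot_le3 p1 p2 p3 q1 q2 q3 (by positivity)
  have key : (p1+q1)^2+(p2+q2)^2+(p3+q3)^2 ≤
      (Real.sqrt (p1^2+p2^2+p3^2) + Real.sqrt (q1^2+q2^2+q3^2))^2 := by nlinarith
  calc Real.sqrt ((p1+q1)^2+(p2+q2)^2+(p3+q3)^2)
      ≤ Real.sqrt ((Real.sqrt (p1^2+p2^2+p3^2) + Real.sqrt (q1^2+q2^2+q3^2))^2) :=
        Real.sqrt_le_sqrt key
    _ = _ := Real.sqrt_sq (by positivity)

set_option maxHeartbeats 1000000 in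
/-- `N_u(a) ≤ F(a)` step plus assembly: triangle inequality for the scalar function. -/
private lemma tri_key (t₁ t₂ t₃ ε : ℝ) (ht₁ : 0 < t₁) (ht₂ : 0 < t₂) (ht₃ : 0 < t₃)
    (hε : 0 < ε) (a1 a2 a3 b1 b2 b3 c1 c2 c3 : ℝ)
    (ha1 : 0 ≤ a1) (ha2 : 0 ≤ a2) (ha3 : 0 ≤ a3)
    (hb1 : 0 ≤ b1) (hb2 : 0 ≤ b2) (hb3 : 0 ≤ b3)
    (hc1 : 0 ≤ c1) (hc2 : 0 ≤ c2) (hc3 : 0 ≤ c3)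
    (h1 : c1 ≤ a1 + b1) (h2 : c2 ≤ a2 + b2) (h3 : c3 ≤ a3 + b3) :
    Real.sqrt (t₁*c1^2 + t₂*c2^2 + t₃*c3^2 + ε*Real.sqrt (c1^4+c2^4+c3^4)) ≤
      Real.sqrt (t₁*a1^2 + t₂*a2^2 + t₃*a3^2 + ε*Real.sqrt (a1^4+a2^4+a3^4)) +
      Real.sqrt (t₁*b1^2 + t₂*b2^2 + t₃*b3^2 + ε*Real.sqrt (b1^4+b2^4+b3^4)) := by
  set S : ℝ := Real.sqrt (c1^4+c2^4+c3^4) with hSdef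
  rcases eq_or_lt_of_le (Real.sqrt_nonneg (c1^4+c2^4+c3^4) : (0:ℝ) ≤ S) with hS0 | hS0
  · -- S = 0 : then all cᵢ = 0
    have hsum : c1^4+c2^4+c3^4 = 0 := by
      nlinarith [Real.sq_sqrt (show (0:ℝ) ≤ c1^4+c2^4+c3^4 by positivity), hS0.symm]
    have e1 : c1 = 0 := by
      have : c1^4 = 0 := by nlinarith [pow_nonneg hc1 4, pow_nonneg hc2 4, pow_nonneg hc3 4]
      exact pow_eq_zero_iff (by norm_num) |>.mp this
    have e2 : c2 = 0 := by
      have : c2^4 = 0 := by nlinarith [pow_nonneg hc1 4, pow_nonneg hc2 4, pow_nonneg hc3 4]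
      exact pow_eq_zero_iff (by norm_num) |>.mp this
    have e3 : c3 = 0 := by
      have : c3^4 = 0 := by nlinarith [pow_nonneg hc1 4, pow_nonneg hc2 4, pow_nonneg hc3 4]
      exact pow_eq_zero_iff (by norm_num) |>.mp this
    rw [hSdef, e1, e2, e3]
    simp only [ne_eq, OfNat.ofNat_ne_zero, not_false_eq_true, zero_pow, mul_zero, add_zero,
      Real.sqrt_zero, zero_add, mul_zero]
    positivity
  · -- main case: S > 0
    have hS2 : S^2 = c1^4+c2^4+c3^4 := Real.sq_sqrt (by positivity)
    set u1 : ℝ := c1^2/S with hu1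
    set u2 : ℝ := c2^2/S with hu2
    set u3 : ℝ := c3^2/S with hu3
    have hu1n : 0 ≤ u1 := by positivity
    have hu2n : 0 ≤ u2 := by positivity
    have hu3n : 0 ≤ u3 := by positivity
    have hS2ne : S^2 ≠ 0 := by positivity
    have hunorm : u1^2+u2^2+u3^2 = 1 := by
      have e : u1^2+u2^2+u3^2 = (c1^4+c2^4+c3^4)/S^2 := by
        rw [hu1, hu2, hu3]; ring
      rw [e, ← hS2, div_self hS2ne]
    set d1 : ℝ := t₁ + ε*u1 with hd1
    set d2 : ℝ := t₂ + ε*u2 with hd2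
    set d3 : ℝ := t₃ + ε*u3 with hd3
    have hd1p : 0 < d1 := by positivity
    have hd2p : 0 < d2 := by positivity
    have hd3p : 0 < d3 := by positivity
    -- LHS argument equals Σ dᵢ cᵢ²
    have hsumS : u1*c1^2+u2*c2^2+u3*c3^2 = S := by
      have e : u1*c1^2+u2*c2^2+u3*c3^2 = (c1^4+c2^4+c3^4)/S := by
        rw [hu1, hu2, hu3]; ring
      rw [e, ← hS2, sq, mul_div_assoc, div_self hS0.ne', mul_one]
    have harg : t₁*c1^2 + t₂*c2^2 + t₃*c3^2 + ε*S = d1*c1^2 + d2*c2^2 + d3*c3^2 := by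
      rw [hd1, hd2, hd3, ← hsumS]; ring
    clear_value S u1 u2 u3 d1 d2 d3
    -- N_u(a) ≤ F(a) and same for b
    have Nle : ∀ w1 w2 w3 : ℝ, 0 ≤ w1 → 0 ≤ w2 → 0 ≤ w3 →
        Real.sqrt (d1*w1^2 + d2*w2^2 + d3*w3^2) ≤
        Real.sqrt (t₁*w1^2 + t₂*w2^2 + t₃*w3^2 + ε*Real.sqrt (w1^4+w2^4+w3^4)) := by
      intro w1 w2 w3 hw1 hw2 hw3
      apply Real.sqrt_le_sqrt
      have hdot : u1*w1^2+u2*w2^2+u3*w3^2 ≤ Real.sqrt (w1^4+w2^4+w3^4) := by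
        have hnn : 0 ≤ u1*w1^2+u2*w2^2+u3*w3^2 :=
          add_nonneg (add_nonneg (mul_nonneg hu1n (sq_nonneg w1))
            (mul_nonneg hu2n (sq_nonneg w2))) (mul_nonneg hu3n (sq_nonneg w3))
        have := dot_le3 u1 u2 u3 (w1^2) (w2^2) (w3^2) hnn
        rw [hunorm, Real.sqrt_one, one_mul] at this
        calc u1*w1^2+u2*w2^2+u3*w3^2 ≤ Real.sqrt ((w1^2)^2+(w2^2)^2+(w3^2)^2) := this
          _ = Real.sqrt (w1^4+w2^4+w3^4) := by congr 1; ring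
      rw [hd1, hd2, hd3]
      linarith [mul_le_mul_of_nonneg_left hdot hε.le]
    -- weighted Minkowski
    have hmink : Real.sqrt (d1*(a1+b1)^2 + d2*(a2+b2)^2 + d3*(a3+b3)^2) ≤
        Real.sqrt (d1*a1^2 + d2*a2^2 + d3*a3^2) + Real.sqrt (d1*b1^2 + d2*b2^2 + d3*b3^2) := by
      have r1 : Real.sqrt d1 ^ 2 = d1 := Real.sq_sqrt hd1p.le
      have r2 : Real.sqrt d2 ^ 2 = d2 := Real.sq_sqrt hd2p.le
      have r3 : Real.sqrt d3 ^ 2 = d3 := Real.sq_sqrt hd3p.le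
      have e1 : d1*(a1+b1)^2 + d2*(a2+b2)^2 + d3*(a3+b3)^2 =
          (Real.sqrt d1*a1 + Real.sqrt d1*b1)^2 + (Real.sqrt d2*a2 + Real.sqrt d2*b2)^2 +
          (Real.sqrt d3*a3 + Real.sqrt d3*b3)^2 := by
        linear_combination (-((a1+b1)^2))*r1 - (a2+b2)^2*r2 - (a3+b3)^2*r3
      have e2 : d1*a1^2 + d2*a2^2 + d3*a3^2 =
          (Real.sqrt d1*a1)^2 + (Real.sqrt d2*a2)^2 + (Real.sqrt d3*a3)^2 := by
        linear_combination (-(a1^2))*r1 - a2^2*r2 - a3^2*r3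
      have e3 : d1*b1^2 + d2*b2^2 + d3*b3^2 =
          (Real.sqrt d1*b1)^2 + (Real.sqrt d2*b2)^2 + (Real.sqrt d3*b3)^2 := by
        linear_combination (-(b1^2))*r1 - b2^2*r2 - b3^2*r3
      rw [e1, e2, e3]
      exact mink3 _ _ _ _ _ _ (by positivity) (by positivity) (by positivity)
        (by positivity) (by positivity) (by positivity)
    calc Real.sqrt (t₁*c1^2 + t₂*c2^2 + t₃*c3^2 + ε*S)
        = Real.sqrt (d1*c1^2 + d2*c2^2 + d3*c3^2) := by rw [harg]
      _ ≤ Real.sqrt (d1*(a1+b1)^2 + d2*(a2+b2)^2 + d3*(a3+b3)^2) := by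
          apply Real.sqrt_le_sqrt
          have s1 : c1^2 ≤ (a1+b1)^2 := pow_le_pow_left₀ hc1 h1 2
          have s2 : c2^2 ≤ (a2+b2)^2 := pow_le_pow_left₀ hc2 h2 2
          have s3 : c3^2 ≤ (a3+b3)^2 := pow_le_pow_left₀ hc3 h3 2
          exact add_le_add (add_le_add (mul_le_mul_of_nonneg_left s1 hd1p.le)
            (mul_le_mul_of_nonneg_left s2 hd2p.le)) (mul_le_mul_of_nonneg_left s3 hd3p.le)
      _ ≤ Real.sqrt (d1*a1^2 + d2*a2^2 + d3*a3^2) +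
          Real.sqrt (d1*b1^2 + d2*b2^2 + d3*b3^2) := hmink
      _ ≤ _ := add_le_add (Nle a1 a2 a3 ha1 ha2 ha3) (Nle b1 b2 b3 hb1 hb2 hb3)

/-- For real inner product spaces `E₁`, `E₂`, `E₃`, positive reals `t₁, t₂, t₃` and
`ε > 0`, the function
`f (x₁, x₂, x₃) = √(t₁‖x₁‖² + t₂‖x₂‖² + t₃‖x₃‖² + ε √(‖x₁‖⁴ + ‖x₂‖⁴ + ‖x₃‖⁴))`
is a norm on `E₁ × E₂ × E₃`. -/
theorem perturbed_norm_three_factors {E₁ E₂ E₃ : Type*}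
    [NormedAddCommGroup E₁] [InnerProductSpace ℝ E₁]
    [NormedAddCommGroup E₂] [InnerProductSpace ℝ E₂]
    [NormedAddCommGroup E₃] [InnerProductSpace ℝ E₃]
    (t₁ t₂ t₃ ε : ℝ) (ht₁ : 0 < t₁) (ht₂ : 0 < t₂) (ht₃ : 0 < t₃) (hε : 0 < ε)
    (f : E₁ × E₂ × E₃ → ℝ)
    (hf : ∀ x : E₁ × E₂ × E₃,
      f x = Real.sqrt (t₁ * ‖x.1‖ ^ 2 + t₂ * ‖x.2.1‖ ^ 2 + t₃ * ‖x.2.2‖ ^ 2 +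
        ε * Real.sqrt (‖x.1‖ ^ 4 + ‖x.2.1‖ ^ 4 + ‖x.2.2‖ ^ 4))) :
    (f 0 = 0) ∧ (∀ x : E₁ × E₂ × E₃, x ≠ 0 → 0 < f x) ∧
    (∀ (c : ℝ) (x : E₁ × E₂ × E₃), f (c • x) = |c| * f x) ∧
    (∀ x y : E₁ × E₂ × E₃, f (x + y) ≤ f x + f y) := by
  refine ⟨?_, ?_, ?_, ?_⟩
  · rw [hf]; simp
  · intro x hx
    rw [hf]
    apply Real.sqrt_pos.mpr
    have hcases : x.1 ≠ 0 ∨ x.2.1 ≠ 0 ∨ x.2.2 ≠ 0 := by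
      by_contra h
      push_neg at h
      exact hx (Prod.ext h.1 (Prod.ext h.2.1 h.2.2))
    have hmain : 0 < t₁ * ‖x.1‖ ^ 2 + t₂ * ‖x.2.1‖ ^ 2 + t₃ * ‖x.2.2‖ ^ 2 := by
      rcases hcases with h | h | h
      · have h1 : 0 < ‖x.1‖ := norm_pos_iff.mpr h
        have := mul_pos ht₁ (pow_pos h1 2)
        nlinarith [mul_nonneg ht₂.le (sq_nonneg ‖x.2.1‖), mul_nonneg ht₃.le (sq_nonneg ‖x.2.2‖)]
      · have h1 : 0 < ‖x.2.1‖ := norm_pos_iff.mpr h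
        have := mul_pos ht₂ (pow_pos h1 2)
        nlinarith [mul_nonneg ht₁.le (sq_nonneg ‖x.1‖), mul_nonneg ht₃.le (sq_nonneg ‖x.2.2‖)]
      · have h1 : 0 < ‖x.2.2‖ := norm_pos_iff.mpr h
        have := mul_pos ht₃ (pow_pos h1 2)
        nlinarith [mul_nonneg ht₁.le (sq_nonneg ‖x.1‖), mul_nonneg ht₂.le (sq_nonneg ‖x.2.1‖)]
    have htail : 0 ≤ ε * Real.sqrt (‖x.1‖ ^ 4 + ‖x.2.1‖ ^ 4 + ‖x.2.2‖ ^ 4) := by positivity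
    linarith
  · intro c x
    rw [hf, hf]
    have e1 : (c • x).1 = c • x.1 := rfl
    have e2 : (c • x).2.1 = c • x.2.1 := rfl
    have e3 : (c • x).2.2 = c • x.2.2 := rfl
    rw [e1, e2, e3, norm_smul, norm_smul, norm_smul, Real.norm_eq_abs]
    have h4 : (|c| * ‖x.1‖) ^ 4 + (|c| * ‖x.2.1‖) ^ 4 + (|c| * ‖x.2.2‖) ^ 4 =
        (|c| ^ 2) ^ 2 * (‖x.1‖ ^ 4 + ‖x.2.1‖ ^ 4 + ‖x.2.2‖ ^ 4) := by ring
    rw [h4, Real.sqrt_mul (sq_nonneg _), Real.sqrt_sq (sq_nonneg _)]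
    have h5 : t₁ * (|c| * ‖x.1‖) ^ 2 + t₂ * (|c| * ‖x.2.1‖) ^ 2 + t₃ * (|c| * ‖x.2.2‖) ^ 2 +
        ε * (|c| ^ 2 * Real.sqrt (‖x.1‖ ^ 4 + ‖x.2.1‖ ^ 4 + ‖x.2.2‖ ^ 4)) =
        |c| ^ 2 * (t₁ * ‖x.1‖ ^ 2 + t₂ * ‖x.2.1‖ ^ 2 + t₃ * ‖x.2.2‖ ^ 2 +
          ε * Real.sqrt (‖x.1‖ ^ 4 + ‖x.2.1‖ ^ 4 + ‖x.2.2‖ ^ 4)) := by ring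
    rw [h5, Real.sqrt_mul (sq_nonneg _), Real.sqrt_sq (abs_nonneg c)]
  · intro x y
    rw [hf, hf, hf]
    have e1 : (x + y).1 = x.1 + y.1 := rfl
    have e2 : (x + y).2.1 = x.2.1 + y.2.1 := rfl
    have e3 : (x + y).2.2 = x.2.2 + y.2.2 := rfl
    rw [e1, e2, e3]
    exact tri_key t₁ t₂ t₃ ε ht₁ ht₂ ht₃ hε ‖x.1‖ ‖x.2.1‖ ‖x.2.2‖ ‖y.1‖ ‖y.2.1‖ ‖y.2.2‖
      ‖x.1 + y.1‖ ‖x.2.1 + y.2.1‖ ‖x.2.2 + y.2.2‖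
      (norm_nonneg _) (norm_nonneg _) (norm_nonneg _) (norm_nonneg _) (norm_nonneg _)
      (norm_nonneg _) (norm_nonneg _) (norm_nonneg _) (norm_nonneg _)
      (norm_add_le _ _) (norm_add_le _ _) (norm_add_le _ _)
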